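/- For every γ with 0 ≤ γ < 1 and every r with (1+γ)/(3+γ) < r < 1, there exists a function f ∈ B(Ω_γ) with Taylor expansion f(z) = Σ_{n≥0} a_n z^n on 𝔻 such that Σ_{n≥0} |a_n| r^n + (8/9)·(S_{r(1-γ)}/π) > 1, where S_ρ is the area, counted with multiplicity, of the image of the disk 𝔻(0;ρ) under f. In other words, the radius (1+γ)/(3+γ) in the Bohr-type inequality Σ_{n≥0} |a_n| r^n + (8/9)·(S_{r(1-γ)}/π) ≤ 1 cannot be replaced by any larger number. -/

import Mathlib

open Complex MeasureTheory

lemma aux_schwarz_bound (α : ℝ) (hα0 : 0 ≤ α) (hα1 : α ≤ 1) (w : ℂ)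
    (hw : ‖w‖ ≤ 1) :
    ‖(α:ℂ) - w‖ ≤ ‖1 - (α:ℂ)*w‖ := by
  have hw2 : Complex.normSq w ≤ 1 := by
    rw [← Complex.sq_norm]
    nlinarith [norm_nonneg w]
  have hsq : Complex.normSq ((α:ℂ) - w) ≤ Complex.normSq (1 - (α:ℂ)*w) := by
    simp only [Complex.normSq_apply, Complex.sub_re, Complex.sub_im, Complex.one_re,
      Complex.one_im, Complex.mul_re, Complex.mul_im, Complex.ofReal_re, Complex.ofReal_im,
      Complex.normSq_apply] at hw2 ⊢
    nlinarith [mul_nonneg (show (0:ℝ) ≤ 1-α^2 by nlinarith) (sub_nonneg.2 hw2)]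
  calc ‖(α:ℂ) - w‖ = Real.sqrt (Complex.normSq ((α:ℂ) - w)) := by
        rw [Complex.norm_def]
    _ ≤ Real.sqrt (Complex.normSq (1 - (α:ℂ)*w)) := Real.sqrt_le_sqrt hsq
    _ = ‖1 - (α:ℂ)*w‖ := by rw [Complex.norm_def]

/-- **Sharpness in Theorem 1.** For `0 ≤ γ < 1` and any `r` with `(1+γ)/(3+γ) < r < 1`,
there is a function `f ∈ B(Ω_γ)` with expansion `Σ a_n z^n` on `𝔻` for which
`Σ |a_n| r^n + (8/9)(S_{r(1-γ)}/π) > 1`; hence the radius `(1+γ)/(3+γ)` is best possible. -/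
theorem bohr_area_omega_gamma_sharp (γ : ℝ) (hγ₀ : 0 ≤ γ) (hγ₁ : γ < 1)
    (r : ℝ) (hr₀ : (1 + γ) / (3 + γ) < r) (hr₁ : r < 1) :
    ∃ (f : ℂ → ℂ) (a : ℕ → ℂ),
      DifferentiableOn ℂ f (Metric.ball (-(γ / (1 - γ)) : ℂ) (1 / (1 - γ))) ∧
      (∀ z ∈ Metric.ball (-(γ / (1 - γ)) : ℂ) (1 / (1 - γ)), ‖f z‖ ≤ 1) ∧
      (∀ z ∈ Metric.ball (0 : ℂ) 1, HasSum (fun n => a n * z ^ n) (f z)) ∧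
      1 < (∑' n : ℕ, ‖a n‖ * r ^ n)
        + (8 / 9) * ((∫ z in Metric.ball (0 : ℂ) (r * (1 - γ)),
            ‖deriv f z‖ ^ 2 ∂volume) / Real.pi) := by
  have hγ' : (0:ℝ) < 1 - γ := by linarith
  have hr0 : (0:ℝ) < r := lt_trans (by positivity) hr₀
  -- key inequality from hr₀ :  (1+γ) < r*(3+γ)
  have hkey0 : 1 + γ < r * (3 + γ) := by
    rw [div_lt_iff₀ (by linarith)] at hr₀; linarith
  set P : ℝ := r*(1-γ)*(2+γ) + γ*(1+γ) with hPdef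
  set Q : ℝ := (1+γ) - r*(1-γ) with hQdef
  have hPpos : 0 < P := by
    have : 0 < r*(1-γ)*(2+γ) := by positivity
    nlinarith
  have hQP : Q/P < 1 := by
    rw [div_lt_one hPpos]
    nlinarith
  obtain ⟨α, hγα, hα1, hkey⟩ : ∃ α : ℝ, γ < α ∧ α < 1 ∧ Q < α * P := by
    refine ⟨(1 + max γ (Q/P))/2, ?_, ?_, ?_⟩
    · have h1 : γ ≤ max γ (Q/P) := le_max_left _ _
      have h2 : max γ (Q/P) < 1 := max_lt hγ₁ hQP
      linarith
    · have h2 : max γ (Q/P) < 1 := max_lt hγ₁ hQP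
      linarith
    · have h1 : Q/P ≤ max γ (Q/P) := le_max_right _ _
      have h2 : Q/P < (1 + max γ (Q/P))/2 := by
        have : max γ (Q/P) < 1 := max_lt hγ₁ hQP
        linarith
      calc Q = (Q/P)*P := by field_simp
      _ < (1 + max γ (Q/P))/2 * P := mul_lt_mul_of_pos_right h2 hPpos
  have hα0 : 0 < α := lt_of_le_of_lt hγ₀ hγα
  have hd : (0:ℝ) < 1 - α*γ := by nlinarith
  have hαP : (0:ℝ) < (1-γ)*r*(1+2*α+α*γ) - (1+γ)*(1-α*γ) := by
    rw [hQdef, hPdef] at hkey; nlinarith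
  set c : ℝ := α*(1-γ)/(1-α*γ) with hcdef
  set K : ℝ := (1-α^2)*(1-γ)/(1-α*γ)^2 with hKdef
  set b : ℝ := (α-γ)/(1-α*γ) with hbdef
  clear_value P Q c K b
  have hc0 : 0 ≤ c := by rw [hcdef]; positivity
  have hc1 : c < 1 := by rw [hcdef, div_lt_one hd]; nlinarith
  have hb0 : 0 ≤ b := by rw [hbdef]; exact div_nonneg (by linarith) hd.le
  have hb1 : b < 1 := by rw [hbdef, div_lt_one hd]; nlinarith
  have hK0 : 0 < K := by
    rw [hKdef]
    have : 0 < 1 - α^2 := by nlinarith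
    positivity
  have hcr : c*r < 1 := by nlinarith
  have hbe : b*(1-α*γ) = α-γ := by rw [hbdef]; exact div_mul_cancel₀ _ hd.ne'
  have hce : c*(1-α*γ) = α*(1-γ) := by rw [hcdef]; exact div_mul_cancel₀ _ hd.ne'
  have hKe : K*(1-α*γ)^2 = (1-α^2)*(1-γ) := by
    rw [hKdef]; exact div_mul_cancel₀ _ (pow_ne_zero 2 hd.ne')
  have h1cr : (0:ℝ) < 1 - c*r := by linarith
  have hmain : 1 < K*r*(1-c*r)⁻¹ + b := by
    have h2 : 1 - b < K*r/(1-c*r) := by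
      rw [lt_div_iff₀ h1cr]
      refine lt_of_mul_lt_mul_left ?_ (sq_nonneg (1-α*γ))
      calc (1-α*γ)^2 * ((1-b)*(1-c*r))
          = ((1-α*γ) - b*(1-α*γ)) * ((1-α*γ) - c*(1-α*γ)*r) := by ring
        _ = ((1-α*γ) - (α-γ)) * ((1-α*γ) - α*(1-γ)*r) := by rw [hbe, hce]
        _ < (1-α^2)*(1-γ)*r := by
            have hprod := mul_pos (sub_pos.2 hα1) hαP
            linarith [hprod]
        _ = K*(1-α*γ)^2*r := by rw [hKe]
        _ = (1-α*γ)^2 * (K*r) := by ring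
    rw [← div_eq_mul_inv]
    linarith [h2]
  -- the function and its coefficients
  set f : ℂ → ℂ := fun z => ((α:ℂ) - ((1-(γ:ℂ))*z + γ))/(1 - α*((1-(γ:ℂ))*z + γ)) with hfdef
  set a : ℕ → ℂ := fun n => if n = 0 then ((b:ℝ):ℂ) else -(((K * c^(n-1):ℝ)):ℂ) with hadef
  clear_value f a
  have hdc : ((1:ℂ) - α*γ) ≠ 0 := by
    rw [show ((1:ℂ) - α*γ) = ((1-α*γ:ℝ):ℂ) by push_cast; ring]
    exact_mod_cast hd.ne'
  -- On the big ball, |φ z| < 1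
  have hφ : ∀ z ∈ Metric.ball (-(γ / (1 - γ)) : ℂ) (1 / (1 - γ)),
      ‖(1-(γ:ℂ))*z + γ‖ < 1 := by
    intro z hz
    rw [Metric.mem_ball, Complex.dist_eq] at hz
    have h1 : ((1:ℂ)-γ) ≠ 0 := by
      rw [show ((1:ℂ) - γ) = ((1-γ:ℝ):ℂ) by push_cast; ring]
      exact_mod_cast hγ'.ne'
    have heq : (1-(γ:ℂ))*z + γ = (1-(γ:ℂ)) * (z - -((γ:ℂ) / (1 - γ))) := by
      field_simp
      ring
    rw [heq, norm_mul]
    have habs : ‖1-(γ:ℂ)‖ = 1 - γ := by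
      rw [show ((1:ℂ) - γ) = ((1-γ:ℝ):ℂ) by push_cast; ring, Complex.norm_real, Real.norm_eq_abs,
        abs_of_pos hγ']
    rw [habs]
    calc (1-γ) * ‖z - -((γ:ℂ)/(1-γ))‖ < (1-γ) * (1/(1-γ)) :=
          mul_lt_mul_of_pos_left hz hγ'
      _ = 1 := by field_simp
  -- denominator nonvanishing on the big ball
  have hden : ∀ z ∈ Metric.ball (-(γ / (1 - γ)) : ℂ) (1 / (1 - γ)),
      (1 - (α:ℂ)*((1-(γ:ℂ))*z + γ)) ≠ 0 := by
    intro z hz h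
    have h1 : ‖(α:ℂ)*((1-(γ:ℂ))*z + γ)‖ < 1 := by
      rw [norm_mul, Complex.norm_real, Real.norm_eq_abs, abs_of_pos hα0]
      calc α * ‖(1-(γ:ℂ))*z + γ‖ ≤ 1 * ‖(1-(γ:ℂ))*z + γ‖ := by
            apply mul_le_mul_of_nonneg_right hα1.le (norm_nonneg _)
        _ < 1 := by rw [one_mul]; exact hφ z hz
    rw [sub_eq_zero] at h
    rw [← h] at h1
    simp at h1
  refine ⟨f, a, ?_, ?_, ?_, ?_⟩
  · -- differentiability
    rw [hfdef]
    apply DifferentiableOn.div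
    · fun_prop
    · fun_prop
    · exact hden
  · -- bounded by 1
    intro z hz
    have hw := (hφ z hz).le
    have hpos : 0 < ‖1 - (α:ℂ)*((1-(γ:ℂ))*z + γ)‖ :=
      norm_pos_iff.mpr (hden z hz)
    rw [hfdef]
    simp only
    rw [norm_div, div_le_one hpos]
    exact aux_schwarz_bound α hα0.le hα1.le _ hw
  · -- power series
    intro z hz
    rw [Metric.mem_ball, dist_zero_right] at hz
    have hcz : ‖(c:ℂ)*z‖ < 1 := by
      rw [norm_mul, Complex.norm_real, Real.norm_eq_abs, _root_.abs_of_nonneg hc0]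
      calc c * ‖z‖ ≤ 1 * ‖z‖ := mul_le_mul_of_nonneg_right hc1.le (norm_nonneg z)
        _ < 1 := by rw [one_mul]; exact hz
    have hczne : (1:ℂ) - (c:ℂ)*z ≠ 0 := by
      intro h
      rw [sub_eq_zero] at h
      rw [← h] at hcz
      simp at hcz
    have hgeo : HasSum (fun n : ℕ => (-(K:ℂ)*z) * ((c:ℂ)*z)^n)
        ((-(K:ℂ)*z) * (1 - (c:ℂ)*z)⁻¹) :=
      (hasSum_geometric_of_norm_lt_one hcz).mul_left _
    have hsh : HasSum (fun n : ℕ => a (n+1) * z^(n+1)) ((-(K:ℂ)*z) * (1 - (c:ℂ)*z)⁻¹) := by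
      convert hgeo using 2 with n
      have han : a (n+1) = -(((K * c^n : ℝ)):ℂ) := by rw [hadef]; simp
      rw [han]
      push_cast
      ring
    have := (hasSum_nat_add_iff (f := fun n => a n * z^n) 1).mp hsh
    simp only [Finset.range_one, Finset.sum_singleton, pow_zero, mul_one] at this
    have ha0 : a 0 = ((b:ℝ):ℂ) := by rw [hadef]; norm_num
    rw [ha0] at this
    convert this using 1
    · rfl
    -- f z = -K z (1-cz)⁻¹ + b
    have hbeC : (b:ℂ)*(1-(α:ℂ)*(γ:ℂ)) = (α:ℂ)-(γ:ℂ) := by exact_mod_cast hbe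
    have hceC : (c:ℂ)*(1-(α:ℂ)*(γ:ℂ)) = (α:ℂ)*(1-(γ:ℂ)) := by exact_mod_cast hce
    have hKeC : (K:ℂ)*(1-(α:ℂ)*(γ:ℂ))^2 = (1-(α:ℂ)^2)*(1-(γ:ℂ)) := by exact_mod_cast hKe
    have hden2 : (1 - (α:ℂ)*((1-(γ:ℂ))*z + γ)) = (1-(α:ℂ)*γ) * (1 - (c:ℂ)*z) := by
      linear_combination z * hceC
    have key2 : ((α:ℂ) - ((1-(γ:ℂ))*z + γ)) * (1-(α:ℂ)*γ)
        = ((-(K:ℂ)*z + (b:ℂ)*(1-(c:ℂ)*z)) * (1-(α:ℂ)*γ)) * (1-(α:ℂ)*γ) := by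
      linear_combination (-(1-(α:ℂ)*γ) + z*(α:ℂ)*(1-(γ:ℂ))) * hbeC
        + z*(b:ℂ)*(1-(α:ℂ)*γ) * hceC + z * hKeC
    have key3 : (α:ℂ) - ((1-(γ:ℂ))*z + γ)
        = (-(K:ℂ)*z + (b:ℂ)*(1-(c:ℂ)*z)) * (1-(α:ℂ)*γ) :=
      mul_right_cancel₀ hdc key2
    have hinv : (1-(c:ℂ)*z)⁻¹ * (1-(c:ℂ)*z) = 1 := inv_mul_cancel₀ hczne
    rw [hfdef]
    simp only
    rw [hden2, div_eq_iff (mul_ne_zero hdc hczne)]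
    linear_combination key3 + (K:ℂ)*z*(1-(α:ℂ)*γ)*hinv
  · -- the inequality
    have hInt : 0 ≤ ∫ z in Metric.ball (0 : ℂ) (r * (1 - γ)),
        ‖deriv f z‖ ^ 2 ∂volume :=
      integral_nonneg fun z => by positivity
    have hgeo : HasSum (fun n : ℕ => (K*r)*(c*r)^n) ((K*r)*(1-c*r)⁻¹) := by
      apply HasSum.mul_left
      apply hasSum_geometric_of_norm_lt_one
      rw [Real.norm_eq_abs, _root_.abs_of_nonneg (mul_nonneg hc0 hr0.le)]
      exact hcr
    have hsh : HasSum (fun n : ℕ => ‖a (n+1)‖ * r^(n+1)) ((K*r)*(1-c*r)⁻¹) := by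
      convert hgeo using 2 with n
      have han : a (n+1) = -(((K * c^n : ℝ)):ℂ) := by rw [hadef]; simp
      rw [han, norm_neg, Complex.norm_real, Real.norm_eq_abs,
        _root_.abs_of_nonneg (mul_nonneg hK0.le (pow_nonneg hc0 n)), mul_pow]
      ring
    have hsum := (hasSum_nat_add_iff (f := fun n => ‖a n‖ * r^n) 1).mp hsh
    simp only [Finset.range_one, Finset.sum_singleton, pow_zero, mul_one] at hsum
    have ha0 : ‖a 0‖ = b := by
      rw [hadef]; simp [_root_.abs_of_nonneg hb0]
    rw [ha0] at hsum
    rw [hsum.tsum_eq]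
    have h89 : 0 ≤ (8:ℝ)/9 * ((∫ z in Metric.ball (0 : ℂ) (r * (1 - γ)),
        ‖deriv f z‖ ^ 2 ∂volume) / Real.pi) :=
      mul_nonneg (by norm_num) (div_nonneg hInt Real.pi_pos.le)
    linarith
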